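/- Let G = (V,E) be a finite simple graph and w : V → ℝ≥0. The constant solution x(v) = 1/2 for all v ∈ V is an optimal solution of the standard LP relaxation, i.e. LP(G,w) = w(V)/2, if and only if there exists a dual certificate for w, i.e. a function y : E → ℝ≥0 with y(δ(v)) = w(v) for every v ∈ V. -/

import Mathlib

open Finset

/-- `C` is a vertex cover of `G`. -/
def IsVC {V : Type*} (G : SimpleGraph V) (C : Finset V) : Prop :=
  ∀ ⦃u v : V⦄, G.Adj u v → u ∈ C ∨ v ∈ C

/-- `OPT G w` : minimum weight of a vertex cover of `G`. -/
noncomputable def OPT {V : Type*} [Fintype V] (G : SimpleGraph V) (w : V → ℝ) : ℝ :=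
  sInf {t : ℝ | ∃ C : Finset V, IsVC G C ∧ t = ∑ v ∈ C, w v}

/-- `LPval G w` : optimal value of the standard vertex cover LP relaxation. -/
noncomputable def LPval {V : Type*} [Fintype V] (G : SimpleGraph V) (w : V → ℝ) : ℝ :=
  sInf {t : ℝ | ∃ x : V → ℝ, (∀ v, 0 ≤ x v) ∧ (∀ ⦃u v : V⦄, G.Adj u v → 1 ≤ x u + x v) ∧
    t = ∑ v, w v * x v}

/-- The graph `G ∖ S` (vertices of `S` kept as isolated vertices). -/
def Gdel {V : Type*} (G : SimpleGraph V) (S : Set V) : SimpleGraph V :=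
  SimpleGraph.fromRel (fun u v => G.Adj u v ∧ u ∉ S ∧ v ∉ S)

open scoped Classical in
/-- Sum of `y` over the set of edges described by `P`. -/
noncomputable def ysum {V : Type*} [Fintype V] [DecidableEq V]
    (y : Sym2 V → ℝ) (P : Sym2 V → Prop) : ℝ :=
  ∑ e : Sym2 V, if P e then y e else 0

/-- `y` is a dual certificate for `w` : a feasible dual solution with `y(δ(v)) = w v`. -/
def IsDualCert {V : Type*} [Fintype V] [DecidableEq V] (G : SimpleGraph V)
    (w : V → ℝ) (y : Sym2 V → ℝ) : Prop :=
  (∀ e, 0 ≤ y e) ∧ (∀ e, e ∉ G.edgeSet → y e = 0) ∧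
    ∀ v : V, ysum y (fun e => e ∈ G.edgeSet ∧ v ∈ e) = w v

/-- Membership in the polytope `Q^W`. -/
def memQW {V : Type*} [Fintype V] [DecidableEq V] (G : SimpleGraph V) (w : V → ℝ) : Prop :=
  (∀ v, 0 ≤ w v) ∧ (∑ v, w v) = 2 ∧ ∃ y : Sym2 V → ℝ, IsDualCert G w y

/-- `G` has odd girth `n` : it contains an odd cycle of length `n` and no shorter one. -/
def HasOddGirth {V : Type*} (G : SimpleGraph V) (n : ℕ) : Prop :=
  Odd n ∧ (∃ (v : V) (c : G.Walk v v), c.IsCycle ∧ c.length = n) ∧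
    ∀ (v : V) (c : G.Walk v v), c.IsCycle → Odd c.length → n ≤ c.length

/-- The contraction `G / S` of the vertex set `S` to a single new vertex `none`. -/
def contract {V : Type*} (G : SimpleGraph V) (S : Set V) :
    SimpleGraph (Option {v : V // v ∉ S}) :=
  SimpleGraph.fromRel (fun x y =>
    match x, y with
    | some u, some v => G.Adj u.1 v.1
    | some u, none => ∃ s ∈ S, G.Adj u.1 s
    | none, _ => False)

/-- `I` is an independent set of `G`. -/
def IsIndep {V : Type*} (G : SimpleGraph V) (I : Finset V) : Prop :=
  ∀ ⦃u⦄, u ∈ I → ∀ ⦃v⦄, v ∈ I → ¬ G.Adj u v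

/-- The fractional chromatic number of `G`. -/
noncomputable def fracChrom {V : Type*} [Fintype V] [DecidableEq V] (G : SimpleGraph V) : ℝ :=
  sInf {t : ℝ | ∃ y : Finset V → ℝ, (∀ I, 0 ≤ y I) ∧ (∀ I, ¬ IsIndep G I → y I = 0) ∧
    (∀ v : V, 1 ≤ ∑ I : Finset V, if v ∈ I then y I else 0) ∧ t = ∑ I : Finset V, y I}

namespace HalfOptAux

open scoped Classical

variable {V : Type*} [Fintype V] [DecidableEq V]

noncomputable def Amap (G : SimpleGraph V) (y : Sym2 V → ℝ) (v : V) : ℝ :=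
  ysum y (fun e => e ∈ G.edgeSet ∧ v ∈ e)

lemma Amap_eq (G : SimpleGraph V) (y : Sym2 V → ℝ) (v : V) :
    Amap G y v = ∑ e : Sym2 V, if e ∈ G.edgeSet ∧ v ∈ e then y e else 0 := by
  unfold Amap ysum
  refine Finset.sum_congr rfl fun e _ => ?_
  congr

lemma pair_sum {u v : V} (h : u ≠ v) (f : V → ℝ) :
    ∑ v' : V, (if v' ∈ s(u, v) then f v' else 0) = f u + f v := by
  have key : ∀ v' : V, (if v' ∈ s(u, v) then f v' else 0)
      = (if v' = u then f v' else 0) + (if v' = v then f v' else 0) := by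
    intro v'
    by_cases h1 : v' = u <;> by_cases h2 : v' = v <;>
      simp_all [Sym2.mem_iff]
  rw [Finset.sum_congr rfl fun v' _ => key v', Finset.sum_add_distrib]
  simp

lemma Amap_add_smul (G : SimpleGraph V) (y y' : Sym2 V → ℝ) (t : ℝ) (v : V) :
    Amap G (fun e => y e + t * y' e) v = Amap G y v + t * Amap G y' v := by
  simp only [Amap_eq]
  rw [Finset.mul_sum, ← Finset.sum_add_distrib]
  refine Finset.sum_congr rfl fun e _ => ?_
  split_ifs <;> ring

lemma Amap_indicator (G : SimpleGraph V) {u v : V} (h : G.Adj u v) (v' : V) :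
    Amap G (fun e => if e = s(u, v) then 1 else 0) v'
      = if v' ∈ s(u, v) then 1 else 0 := by
  simp only [Amap_eq]
  have key : ∀ e : Sym2 V,
      (if e ∈ G.edgeSet ∧ v' ∈ e then (if e = s(u, v) then (1:ℝ) else 0) else 0)
      = (if e = s(u, v) then (if v' ∈ s(u, v) then (1:ℝ) else 0) else 0) := by
    intro e
    by_cases he : e = s(u, v)
    · subst he
      by_cases hv : v' ∈ s(u, v) <;> simp [SimpleGraph.mem_edgeSet, h, hv]
    · simp [he]
  have hs : (∑ e : Sym2 V, if e ∈ G.edgeSet ∧ v' ∈ e then (if e = s(u, v) then (1:ℝ) else 0) else 0)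
      = ∑ e : Sym2 V, if e = s(u, v) then (if v' ∈ s(u, v) then (1:ℝ) else 0) else 0 :=
    Finset.sum_congr rfl fun e _ => key e
  rw [hs]
  simp

lemma le_Amap (G : SimpleGraph V) {y : Sym2 V → ℝ} (hy : ∀ e, 0 ≤ y e)
    {e₀ : Sym2 V} (he : e₀ ∈ G.edgeSet) {v : V} (hv : v ∈ e₀) : y e₀ ≤ Amap G y v := by
  simp only [Amap_eq]
  have h2 := Finset.single_le_sum
    (f := fun e => if e ∈ G.edgeSet ∧ v ∈ e then y e else 0)
    (fun e _ => by split_ifs with h3; exacts [hy e, le_refl 0]) (Finset.mem_univ e₀)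
  beta_reduce at h2
  rwa [if_pos ⟨he, hv⟩] at h2

lemma Amap_nonneg (G : SimpleGraph V) {y : Sym2 V → ℝ} (hy : ∀ e, 0 ≤ y e) (v : V) :
    0 ≤ Amap G y v := by
  simp only [Amap_eq]
  exact Finset.sum_nonneg fun e _ => by split_ifs with h3; exacts [hy e, le_refl 0]

lemma swap_sum (G : SimpleGraph V) (y : Sym2 V → ℝ) (f : V → ℝ) :
    ∑ v, f v * Amap G y v
      = ∑ e : Sym2 V,
          (if e ∈ G.edgeSet then y e * (∑ v, if v ∈ e then f v else 0) else 0) := by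
  simp only [Amap_eq]
  have h1 : ∀ v, f v * ∑ e : Sym2 V, (if e ∈ G.edgeSet ∧ v ∈ e then y e else 0)
      = ∑ e : Sym2 V, (if e ∈ G.edgeSet ∧ v ∈ e then y e * f v else 0) := by
    intro v
    rw [Finset.mul_sum]
    refine Finset.sum_congr rfl fun e _ => ?_
    split_ifs <;> ring
  have hs : (∑ v : V, f v * ∑ e : Sym2 V, if e ∈ G.edgeSet ∧ v ∈ e then y e else 0)
      = ∑ v : V, ∑ e : Sym2 V, (if e ∈ G.edgeSet ∧ v ∈ e then y e * f v else 0) :=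
    Finset.sum_congr rfl fun v _ => h1 v
  rw [hs, Finset.sum_comm]
  refine Finset.sum_congr rfl fun e _ => ?_
  by_cases he : e ∈ G.edgeSet
  · rw [if_pos he, Finset.mul_sum]
    refine Finset.sum_congr rfl fun v _ => ?_
    by_cases hv : v ∈ e
    · rw [if_pos ⟨he, hv⟩, if_pos hv, mul_comm]
    · rw [if_neg (by tauto), if_neg hv, mul_zero]
  · rw [if_neg he]
    refine Finset.sum_eq_zero fun v _ => ?_
    rw [if_neg (by tauto)]

lemma edge_xsum (G : SimpleGraph V) {x : V → ℝ}
    (hx : ∀ ⦃u v⦄, G.Adj u v → 1 ≤ x u + x v)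
    {e : Sym2 V} (he : e ∈ G.edgeSet) : 1 ≤ ∑ v, if v ∈ e then x v else 0 := by
  induction e using Sym2.ind with
  | _ u v =>
    rw [SimpleGraph.mem_edgeSet] at he
    rw [pair_sum he.ne x]
    exact hx he

lemma edge_two (G : SimpleGraph V) {e : Sym2 V} (he : e ∈ G.edgeSet) :
    ∑ v, (if v ∈ e then (1:ℝ) else 0) = 2 := by
  induction e using Sym2.ind with
  | _ u v =>
    rw [SimpleGraph.mem_edgeSet] at he
    rw [pair_sum he.ne (fun _ => (1:ℝ))]
    norm_num

lemma small_lemma {a b : ℝ} (hb : 0 ≤ b)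
    (h : ∀ t : ℝ, 0 < t → t < 1 → 0 ≤ a * t + b * t ^ 2) : 0 ≤ a := by
  by_contra hlt
  push_neg at hlt
  have hb1 : (0:ℝ) < 2 * (b + 1) := by linarith
  set t : ℝ := min (1/2) (-a / (2 * (b + 1))) with ht
  have htpos : 0 < t := lt_min (by norm_num) (div_pos (by linarith) hb1)
  have ht1 : t < 1 := lt_of_le_of_lt (min_le_left _ _) (by norm_num)
  have hle : t ≤ -a / (2 * (b + 1)) := min_le_right _ _
  have hle2 : t * (2 * (b + 1)) ≤ -a := by
    rw [← le_div_iff₀ hb1]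
    exact hle
  have := h t htpos ht1
  nlinarith [mul_le_mul_of_nonneg_left hle2 hb, sq_nonneg t, mul_pos htpos htpos]

lemma f_expand (G : SimpleGraph V) (w : V → ℝ) (y₀ y : Sym2 V → ℝ) (t : ℝ) :
    (∑ v, (Amap G (fun e => y₀ e + t * y e) v - w v) ^ 2)
      = (∑ v, (Amap G y₀ v - w v) ^ 2)
        + (2 * ∑ v, (Amap G y₀ v - w v) * Amap G y v) * t
        + (∑ v, (Amap G y v) ^ 2) * t ^ 2 := by
  simp only [Amap_add_smul]
  rw [Finset.mul_sum, Finset.sum_mul, Finset.sum_mul, ← Finset.sum_add_distrib,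
    ← Finset.sum_add_distrib]
  refine Finset.sum_congr rfl fun v _ => ?_
  ring

lemma Amap_zero (G : SimpleGraph V) (v : V) : Amap G (fun _ => (0:ℝ)) v = 0 := by
  simp [Amap_eq]

lemma Amap_neg (G : SimpleGraph V) (y : Sym2 V → ℝ) (v : V) :
    Amap G (fun e => -y e) v = -Amap G y v := by
  simp only [Amap_eq]
  rw [← Finset.sum_neg_distrib]
  refine Finset.sum_congr rfl fun e _ => ?_
  split_ifs <;> ring

omit [Fintype V] [DecidableEq V] in
lemma sym2_exists_mem (e : Sym2 V) : ∃ v : V, v ∈ e := by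
  induction e using Sym2.ind with
  | _ u v => exact ⟨u, Sym2.mem_mk_left u v⟩

end HalfOptAux


open HalfOptAux in
/-- the constant `1/2` solution is LP-optimal iff `w` admits a dual
certificate. -/
theorem half_optimal_iff_dualCert {V : Type*} [Fintype V] [DecidableEq V]
    (G : SimpleGraph V) (w : V → ℝ) (hw : ∀ v, 0 ≤ w v) :
    LPval G w = (∑ v, w v) / 2 ↔ ∃ y : Sym2 V → ℝ, IsDualCert G w y := by
  classical
  set LPset : Set ℝ := {t : ℝ | ∃ x : V → ℝ, (∀ v, 0 ≤ x v) ∧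
      (∀ ⦃u v : V⦄, G.Adj u v → 1 ≤ x u + x v) ∧ t = ∑ v, w v * x v} with hLPset
  have hLPval : LPval G w = sInf LPset := rfl
  have hbdd : BddBelow LPset := by
    refine ⟨0, ?_⟩
    rintro t ⟨x, hx0, hx1, rfl⟩
    exact Finset.sum_nonneg fun v _ => mul_nonneg (hw v) (hx0 v)
  have hhalf_mem : (∑ v, w v) / 2 ∈ LPset := by
    refine ⟨fun _ => 1/2, fun v => by norm_num, fun u v h => by norm_num, ?_⟩
    rw [Finset.sum_div]
    exact Finset.sum_congr rfl fun v _ => by ring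
  have hle : LPval G w ≤ (∑ v, w v) / 2 := by
    rw [hLPval]; exact csInf_le hbdd hhalf_mem
  constructor
  · -- hard direction
    intro hLP
    by_contra hno
    push_neg at hno
    -- abbreviations
    have hWnn : (0:ℝ) ≤ ∑ v, (w v)^2 := Finset.sum_nonneg fun v _ => sq_nonneg _
    set W : ℝ := ∑ v, (w v)^2 with hW
    set M : ℝ := (∑ v, w v) + Real.sqrt W + 1 with hM
    have hMnn : 0 ≤ M := by
      have h1 : 0 ≤ ∑ v, w v := Finset.sum_nonneg fun v _ => hw v
      have h2 := Real.sqrt_nonneg W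
      rw [hM]; linarith
    set C : Set (Sym2 V → ℝ) :=
      Set.pi Set.univ (fun e => if e ∈ G.edgeSet then Set.Icc 0 M else {0}) with hC
    have hCcpt : IsCompact C := by
      refine isCompact_univ_pi fun e => ?_
      split_ifs
      exacts [isCompact_Icc, isCompact_singleton]
    have h0C : (0 : Sym2 V → ℝ) ∈ C := by
      intro e _
      dsimp only
      split_ifs
      exacts [Set.mem_Icc.2 ⟨le_refl 0, hMnn⟩, rfl]
    have hfc : Continuous (fun y : Sym2 V → ℝ => ∑ v, (Amap G y v - w v)^2) := by
      refine continuous_finset_sum _ fun v _ => ?_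
      have hA : Continuous (fun y : Sym2 V → ℝ => Amap G y v) := by
        simp only [Amap_eq]
        refine continuous_finset_sum _ fun e _ => ?_
        by_cases hP : e ∈ G.edgeSet ∧ v ∈ e
        · simp only [if_pos hP]; exact continuous_apply e
        · simp only [if_neg hP]; exact continuous_const
      exact (hA.sub continuous_const).pow 2
    obtain ⟨y₀, hy₀C, hy₀min⟩ := hCcpt.exists_isMinOn ⟨0, h0C⟩ hfc.continuousOn
    have hy₀nn : ∀ e, 0 ≤ y₀ e := by
      intro e
      have h1 := hy₀C e (Set.mem_univ e)
      dsimp only at h1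
      split_ifs at h1
      exacts [h1.1, le_of_eq h1.symm]
    have hy₀sup : ∀ e, e ∉ G.edgeSet → y₀ e = 0 := by
      intro e he
      have h1 := hy₀C e (Set.mem_univ e)
      dsimp only at h1
      rwa [if_neg he] at h1
    have hf0 : ∑ v, (Amap G (0 : Sym2 V → ℝ) v - w v)^2 = W := by
      rw [hW]
      refine Finset.sum_congr rfl fun v _ => ?_
      have h1 : Amap G (0 : Sym2 V → ℝ) v = 0 := Amap_zero G v
      rw [h1]; ring
    -- global minimality on the cone
    have hglob : ∀ y : Sym2 V → ℝ, (∀ e, 0 ≤ y e) → (∀ e, e ∉ G.edgeSet → y e = 0) →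
        ∑ v, (Amap G y₀ v - w v)^2 ≤ ∑ v, (Amap G y v - w v)^2 := by
      intro y hynn hysup
      by_cases hb : ∀ e, y e ≤ M
      · refine hy₀min ?_
        intro e _
        dsimp only
        by_cases he : e ∈ G.edgeSet
        · rw [if_pos he]; exact Set.mem_Icc.2 ⟨hynn e, hb e⟩
        · rw [if_neg he]; exact hysup e he
      · push_neg at hb
        obtain ⟨e₀, he₀⟩ := hb
        have he₀E : e₀ ∈ G.edgeSet := by
          by_contra hE
          rw [hysup e₀ hE] at he₀
          linarith
        obtain ⟨v₀, hv₀⟩ := sym2_exists_mem e₀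
        have hA : y e₀ ≤ Amap G y v₀ := le_Amap G hynn he₀E hv₀
        have hw₀ : w v₀ ≤ ∑ v, w v := Finset.single_le_sum (fun v _ => hw v) (mem_univ v₀)
        have h1 : Real.sqrt W < Amap G y v₀ - w v₀ := by
          rw [hM] at he₀; linarith
        have hterm : W < (Amap G y v₀ - w v₀)^2 := by
          calc W = Real.sqrt W ^ 2 := (Real.sq_sqrt hWnn).symm
          _ < (Amap G y v₀ - w v₀)^2 :=
            pow_lt_pow_left₀ h1 (Real.sqrt_nonneg W) (by norm_num)
        have hfy : W < ∑ v, (Amap G y v - w v)^2 :=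
          lt_of_lt_of_le hterm (Finset.single_le_sum (f := fun v => (Amap G y v - w v)^2)
            (fun v _ => sq_nonneg _) (mem_univ v₀))
        have hfy₀ : ∑ v, (Amap G y₀ v - w v)^2 ≤ W := by
          rw [← hf0]; exact hy₀min h0C
        linarith
    -- variational inequality
    have hD : ∀ y : Sym2 V → ℝ, (∀ e, 0 ≤ y e) → (∀ e, e ∉ G.edgeSet → y e = 0) →
        0 ≤ ∑ v, (Amap G y₀ v - w v) * Amap G y v := by
      intro y hynn hysup
      have h2 : 0 ≤ 2 * ∑ v, (Amap G y₀ v - w v) * Amap G y v := by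
        refine small_lemma (b := ∑ v, (Amap G y v)^2)
          (Finset.sum_nonneg fun v _ => sq_nonneg _) fun t ht0 ht1 => ?_
        have hmem := hglob (fun e => y₀ e + t * y e)
          (fun e => add_nonneg (hy₀nn e) (mul_nonneg ht0.le (hynn e)))
          (fun e he => by beta_reduce; rw [hy₀sup e he, hysup e he]; ring)
        rw [f_expand] at hmem
        linarith
      linarith
    have hD₀le : ∑ v, (Amap G y₀ v - w v) * Amap G y₀ v ≤ 0 := by
      have h2 : 0 ≤ -(2 * ∑ v, (Amap G y₀ v - w v) * Amap G y₀ v) := by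
        have h3 := small_lemma (a := -(2 * ∑ v, (Amap G y₀ v - w v) * Amap G y₀ v))
          (b := ∑ v, (Amap G (fun e => -y₀ e) v)^2)
          (Finset.sum_nonneg fun v _ => sq_nonneg _) ?_
        · exact h3
        intro t ht0 ht1
        have hmem := hglob (fun e => y₀ e + t * (-y₀ e))
          (fun e => by
            beta_reduce
            nlinarith [hy₀nn e, mul_nonneg (sub_nonneg.2 ht1.le) (hy₀nn e)])
          (fun e he => by beta_reduce; rw [hy₀sup e he]; ring)
        rw [f_expand] at hmem
        have hneg : ∑ v, (Amap G y₀ v - w v) * Amap G (fun e => -y₀ e) v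
            = -(∑ v, (Amap G y₀ v - w v) * Amap G y₀ v) := by
          rw [← Finset.sum_neg_distrib]
          refine Finset.sum_congr rfl fun v _ => ?_
          rw [Amap_neg]; ring
        rw [hneg] at hmem
        linarith
      linarith
    have hD₀ : ∑ v, (Amap G y₀ v - w v) * Amap G y₀ v = 0 :=
      le_antisymm hD₀le (hD y₀ hy₀nn hy₀sup)
    -- z and its properties
    set z : V → ℝ := fun v => w v - Amap G y₀ v with hz
    have hz_edge : ∀ ⦃u v : V⦄, G.Adj u v → z u + z v ≤ 0 := by
      intro u v huv
      have h1 := hD (fun e => if e = s(u, v) then 1 else 0)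
        (fun e => by beta_reduce; split_ifs <;> norm_num)
        (fun e he => by
          beta_reduce
          rw [if_neg]
          rintro rfl
          exact he (G.mem_edgeSet.2 huv))
      have h2 : ∑ v', (Amap G y₀ v' - w v') * Amap G (fun e => if e = s(u, v) then (1:ℝ) else 0) v'
          = -(z u + z v) := by
        have h3 : ∀ v' : V, (Amap G y₀ v' - w v') * Amap G (fun e => if e = s(u, v) then (1:ℝ) else 0) v'
            = (if v' ∈ s(u, v) then -z v' else 0) := by
          intro v'
          rw [Amap_indicator G huv]
          split_ifs <;> simp [hz] <;> ring
        rw [Finset.sum_congr rfl fun v' _ => h3 v']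
        have h4 : ∑ v', (if v' ∈ s(u, v) then -z v' else 0) = -z u + -z v :=
          pair_sum huv.ne (fun v' => -z v')
        rw [h4]; ring
      rw [h2] at h1
      linarith
    have hzA : ∑ v, z v * Amap G y₀ v = 0 := by
      have h1 : ∑ v, z v * Amap G y₀ v = -(∑ v, (Amap G y₀ v - w v) * Amap G y₀ v) := by
        rw [← Finset.sum_neg_distrib]
        refine Finset.sum_congr rfl fun v _ => ?_
        rw [hz]; ring
      rw [h1, hD₀, neg_zero]
    have hzw : ∑ v, w v * z v = ∑ v, z v ^ 2 := by
      have h1 : ∑ v, w v * z v = ∑ v, (z v ^ 2 + z v * Amap G y₀ v) := by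
        refine Finset.sum_congr rfl fun v _ => ?_
        rw [hz]; ring
      rw [h1, Finset.sum_add_distrib, hzA, add_zero]
    have hzpos : 0 < ∑ v, z v ^ 2 := by
      have hzne : ∃ v, z v ≠ 0 := by
        by_contra hzz
        push_neg at hzz
        refine hno y₀ ⟨hy₀nn, hy₀sup, fun v => ?_⟩
        have h1 := hzz v
        rw [hz] at h1
        have h2 : Amap G y₀ v = w v := by
          have := sub_eq_zero.mp h1
          linarith [this]
        exact h2
      obtain ⟨v₁, hv₁⟩ := hzne
      exact Finset.sum_pos' (fun v _ => sq_nonneg _) ⟨v₁, mem_univ v₁, by positivity⟩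
    -- construct improved LP solution
    set B : ℝ := (∑ v, |z v|) + 1 with hB
    have hBpos : 0 < B := by
      have : 0 ≤ ∑ v, |z v| := Finset.sum_nonneg fun v _ => abs_nonneg _
      rw [hB]; linarith
    have hzB : ∀ v, |z v| ≤ B := by
      intro v
      have h1 : |z v| ≤ ∑ v', |z v'| :=
        Finset.single_le_sum (f := fun v' => |z v'|) (fun v' _ => abs_nonneg _) (mem_univ v)
      rw [hB]; linarith
    set ε : ℝ := 1 / (2 * B) with hε
    have hεpos : 0 < ε := by rw [hε]; positivity
    have hεB : ε * B = 1 / 2 := by rw [hε]; field_simp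
    set x : V → ℝ := fun v => 1/2 - ε * z v with hx
    have hx0 : ∀ v, 0 ≤ x v := by
      intro v
      have h1 : ε * z v ≤ ε * |z v| := mul_le_mul_of_nonneg_left (le_abs_self _) hεpos.le
      have h2 : ε * |z v| ≤ ε * B := mul_le_mul_of_nonneg_left (hzB v) hεpos.le
      have h3 : ε * z v ≤ 1/2 := by
        calc ε * z v ≤ ε * |z v| := h1
          _ ≤ ε * B := h2
          _ = 1/2 := hεB
      rw [hx]
      dsimp only
      clear_value x ε B z
      linarith
    have hx1 : ∀ ⦃u v : V⦄, G.Adj u v → 1 ≤ x u + x v := by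
      intro u v huv
      have h1 := hz_edge huv
      have h2 : ε * (z u + z v) ≤ 0 := mul_nonpos_of_nonneg_of_nonpos hεpos.le h1
      have h3 : ε * z u + ε * z v ≤ 0 := by
        have h4 := mul_add ε (z u) (z v)
        linarith
      rw [hx]
      dsimp only
      clear_value x ε B z
      linarith
    have hval : ∑ v, w v * x v = (∑ v, w v) / 2 - ε * ∑ v, w v * z v := by
      have h1 : ∑ v, w v * x v = ∑ v, (w v / 2 - ε * (w v * z v)) := by
        refine Finset.sum_congr rfl fun v _ => ?_
        rw [hx]; dsimp only; ring
      rw [h1, Finset.sum_sub_distrib, ← Finset.mul_sum, Finset.sum_div]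
    have hmem2 : (∑ v, w v) / 2 - ε * ∑ v, w v * z v ∈ LPset := ⟨x, hx0, hx1, hval.symm⟩
    have hle2 : LPval G w ≤ (∑ v, w v) / 2 - ε * ∑ v, w v * z v := by
      rw [hLPval]; exact csInf_le hbdd hmem2
    rw [hzw] at hle2
    have : 0 < ε * ∑ v, z v ^ 2 := mul_pos hεpos hzpos
    rw [hLP] at hle2
    linarith
  · -- easy direction
    rintro ⟨y, hynn, hysup, hyd⟩
    refine le_antisymm hle ?_
    rw [hLPval]
    refine le_csInf ⟨_, hhalf_mem⟩ ?_
    rintro t ⟨x, hx0, hx1, rfl⟩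
    have hwA : ∀ v, Amap G y v = w v := hyd
    have h2 : ∑ v, w v = ∑ e : Sym2 V, (if e ∈ G.edgeSet then y e * 2 else 0) := by
      calc ∑ v, w v = ∑ v, (fun _ : V => (1:ℝ)) v * Amap G y v := by
            refine Finset.sum_congr rfl fun v _ => ?_
            rw [hwA v, one_mul]
        _ = ∑ e : Sym2 V, (if e ∈ G.edgeSet then
              y e * (∑ v, if v ∈ e then (fun _ : V => (1:ℝ)) v else 0) else 0) :=
            swap_sum G y (fun _ => (1:ℝ))
        _ = ∑ e : Sym2 V, (if e ∈ G.edgeSet then y e * 2 else 0) := by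
            refine Finset.sum_congr rfl fun e _ => ?_
            by_cases he : e ∈ G.edgeSet
            · rw [if_pos he, if_pos he, edge_two G he]
            · rw [if_neg he, if_neg he]
    have h3 : ∑ v, w v * x v
        = ∑ e : Sym2 V, (if e ∈ G.edgeSet then y e * (∑ v, if v ∈ e then x v else 0) else 0) := by
      calc ∑ v, w v * x v = ∑ v, x v * Amap G y v := by
            refine Finset.sum_congr rfl fun v _ => ?_
            rw [hwA v, mul_comm]
        _ = _ := swap_sum G y x
    have h4 : ∑ e : Sym2 V, (if e ∈ G.edgeSet then y e else 0)
        ≤ ∑ v, w v * x v := by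
      rw [h3]
      refine Finset.sum_le_sum fun e _ => ?_
      by_cases he : e ∈ G.edgeSet
      · rw [if_pos he, if_pos he]
        exact le_mul_of_one_le_right (hynn e) (edge_xsum G hx1 he)
      · rw [if_neg he, if_neg he]
    have h5 : ∑ v, w v = 2 * ∑ e : Sym2 V, (if e ∈ G.edgeSet then y e else 0) := by
      rw [h2, Finset.mul_sum]
      refine Finset.sum_congr rfl fun e _ => ?_
      split_ifs <;> ring
    rw [h5]
    linarith
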